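/- arXiv:1708.05042 — 4 statements merged into one kernel-verified Lean document; each statement's English description precedes it below -/
import Mathlib

section
/- Let k be a field and B ⊂ SL₄(k) the upper triangular Borel. Every element of the B-orbit of e₂₃ (under conjugation) has the form v·e₂₃ + x·e₁₃ + y·e₂₄ + z·e₁₄ with v ≠ 0 and v·z − x·y = 0. -/
open Matrix

def borelSubgroup (n : ℕ) (k : Type*) [Field k] : Set (Matrix (Fin n) (Fin n) k) :=
  {b | b.det = 1 ∧ ∀ i j : Fin n, j < i → b i j = 0}

def borelOrbit (n : ℕ) (k : Type*) [Field k] (x : Matrix (Fin n) (Fin n) k) :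
    Set (Matrix (Fin n) (Fin n) k) :=
  {m | ∃ b ∈ borelSubgroup n k, b * x * b⁻¹ = m}

theorem sl4_orbit_e23_subset (k : Type*) [Field k] :
    borelOrbit 4 k (Matrix.single (1 : Fin 4) 2 (1 : k)) ⊆
      {m | ∃ v x y z : k, v ≠ 0 ∧ v * z - x * y = 0 ∧
        m = v • Matrix.single (1 : Fin 4) 2 (1 : k) +
            x • Matrix.single (0 : Fin 4) 2 (1 : k) +
            y • Matrix.single (1 : Fin 4) 3 (1 : k) +
            z • Matrix.single (0 : Fin 4) 3 (1 : k)} := by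
  rintro m ⟨b, ⟨hdet, htri⟩, rfl⟩
  have ht : b.BlockTriangular id := fun i j h => htri i j h
  haveI : Invertible b.det := hdet ▸ invertibleOne
  haveI : Invertible b := b.invertibleOfDetInvertible
  have htinv : b⁻¹.BlockTriangular id := blockTriangular_inv_of_blockTriangular ht
  -- key entry formula
  have key : ∀ i j : Fin 4,
      (b * Matrix.single (1 : Fin 4) 2 (1 : k) * b⁻¹ : Matrix (Fin 4) (Fin 4) k) i j = b i 1 * b⁻¹ 2 j := by
    intro i j
    simp [Matrix.mul_apply, Matrix.single, Fin.sum_univ_four, mul_comm]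
  -- diagonal entries nonzero
  have hprod : b 0 0 * (b 1 1 * (b 2 2 * b 3 3)) = 1 := by
    have := Matrix.det_of_upperTriangular ht
    rw [hdet] at this
    simpa [Fin.prod_univ_four, mul_assoc] using this.symm
  have hb11 : b 1 1 ≠ 0 := by
    intro h; rw [h] at hprod; simp at hprod
  have hinv22 : b⁻¹ 2 2 ≠ 0 := by
    have h1 : (b⁻¹ * b) 2 2 = 1 := by
      rw [Matrix.nonsing_inv_mul b (isUnit_of_invertible _)]; simp
    rw [Matrix.mul_apply, Fin.sum_univ_four] at h1
    have h20 : b⁻¹ 2 0 = 0 := htinv (by decide : (0 : Fin 4) < 2)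
    have h21 : b⁻¹ 2 1 = 0 := htinv (by decide : (1 : Fin 4) < 2)
    have h32 : b 3 2 = 0 := htri 3 2 (by decide)
    rw [h20, h21, h32] at h1
    intro h; rw [h] at h1; simp at h1
  refine ⟨b 1 1 * b⁻¹ 2 2, b 0 1 * b⁻¹ 2 2, b 1 1 * b⁻¹ 2 3, b 0 1 * b⁻¹ 2 3,
    mul_ne_zero hb11 hinv22, by ring, ?_⟩
  ext i j
  rw [key i j]
  have h20 : b⁻¹ 2 0 = 0 := htinv (by decide : (0 : Fin 4) < 2)
  have h21 : b⁻¹ 2 1 = 0 := htinv (by decide : (1 : Fin 4) < 2)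
  have hb21 : b 2 1 = 0 := htri 2 1 (by decide)
  have hb31 : b 3 1 = 0 := htri 3 1 (by decide)
  fin_cases i <;> fin_cases j <;>
    simp [Matrix.add_apply, Matrix.smul_apply, Matrix.single_apply_same, Matrix.single_apply_of_ne, h20, h21, hb21, hb31]
end

section
/- Let k be an algebraically closed field and B ⊂ SL₄(k) the upper triangular Borel. The nilradical of the Borel subalgebra of sl₄(k) is the disjoint union of exactly 16 B-orbits under the conjugation action. -/
open Matrix

/-- The nilradical: strictly upper triangular 4×4 matrices. -/
def nilradical4 (k : Type*) [Field k] : Set (Matrix (Fin 4) (Fin 4) k) :=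
  {m | ∀ i j : Fin 4, j ≤ i → m i j = 0}

namespace SL4X

variable {k : Type*} [Field k]

def m6 (a b c d e f : k) : Matrix (Fin 4) (Fin 4) k :=
  !![0,a,b,c; 0,0,d,e; 0,0,0,f; 0,0,0,0]

lemma m6_mem (a b c d e f : k) : m6 a b c d e f ∈ nilradical4 k := by
  intro i j hij
  fin_cases i <;> fin_cases j <;>
    first
      | exact absurd hij (by decide)
      | simp [m6, Matrix.vecHead, Matrix.vecTail]

lemma eq_m6_of_mem {x : Matrix (Fin 4) (Fin 4) k} (hx : x ∈ nilradical4 k) :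
    x = m6 (x 0 1) (x 0 2) (x 0 3) (x 1 2) (x 1 3) (x 2 3) := by
  ext i j
  fin_cases i <;> fin_cases j <;>
    simp only [m6, Matrix.cons_val', Matrix.cons_val_zero, Matrix.cons_val_one,
      Matrix.head_cons, Matrix.empty_val', Matrix.cons_val_fin_one, Matrix.head_fin_const,
      Matrix.vecHead, Matrix.vecTail, Matrix.cons_val_succ] <;>
    first
      | rfl
      | exact hx _ _ (by decide)

def Rel (x y : Matrix (Fin 4) (Fin 4) k) : Prop :=
  ∃ g ∈ borelSubgroup 4 k, g * x * g⁻¹ = y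

lemma mem_orbit_iff {x y : Matrix (Fin 4) (Fin 4) k} :
    y ∈ borelOrbit 4 k x ↔ Rel x y := Iff.rfl

section BorelGroup

lemma borel_det {g : Matrix (Fin 4) (Fin 4) k} (hg : g ∈ borelSubgroup 4 k) :
    g.det = 1 := hg.1

lemma borel_isUnit {g : Matrix (Fin 4) (Fin 4) k} (hg : g ∈ borelSubgroup 4 k) :
    IsUnit g.det := by rw [hg.1]; exact isUnit_one

lemma borel_bt {g : Matrix (Fin 4) (Fin 4) k} (hg : g ∈ borelSubgroup 4 k) :
    g.BlockTriangular id := fun i j h => hg.2 i j h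

lemma borel_inv_mem {g : Matrix (Fin 4) (Fin 4) k} (hg : g ∈ borelSubgroup 4 k) :
    g⁻¹ ∈ borelSubgroup 4 k := by
  have hu := borel_isUnit hg
  haveI := g.invertibleOfIsUnitDet hu
  refine ⟨?_, ?_⟩
  · rw [Matrix.det_nonsing_inv, hg.1]; simp
  · have := Matrix.blockTriangular_inv_of_blockTriangular (borel_bt hg)
    exact fun i j h => this h

lemma borel_mul_mem {g h : Matrix (Fin 4) (Fin 4) k} (hg : g ∈ borelSubgroup 4 k)
    (hh : h ∈ borelSubgroup 4 k) : g * h ∈ borelSubgroup 4 k := by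
  refine ⟨by rw [Matrix.det_mul, hg.1, hh.1, one_mul], ?_⟩
  have := (borel_bt hg).mul (borel_bt hh)
  exact fun i j hlt => this hlt

lemma rel_refl (x : Matrix (Fin 4) (Fin 4) k) : Rel x x :=
  ⟨1, ⟨Matrix.det_one, fun i j h => Matrix.one_apply_ne (ne_of_lt h).symm⟩, by simp⟩

lemma rel_symm {x y : Matrix (Fin 4) (Fin 4) k} (h : Rel x y) : Rel y x := by
  obtain ⟨g, hg, rfl⟩ := h
  refine ⟨g⁻¹, borel_inv_mem hg, ?_⟩
  have hu := borel_isUnit hg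
  rw [Matrix.nonsing_inv_nonsing_inv _ hu]
  rw [Matrix.mul_assoc, Matrix.mul_assoc, Matrix.nonsing_inv_mul _ hu, Matrix.mul_one,
    ← Matrix.mul_assoc, Matrix.nonsing_inv_mul _ hu, Matrix.one_mul]

lemma rel_trans {x y z : Matrix (Fin 4) (Fin 4) k} (h1 : Rel x y) (h2 : Rel y z) :
    Rel x z := by
  obtain ⟨g, hg, rfl⟩ := h1
  obtain ⟨h, hh, rfl⟩ := h2
  refine ⟨h * g, borel_mul_mem hh hg, ?_⟩
  rw [Matrix.mul_inv_rev]
  noncomm_ring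

end BorelGroup


lemma det_of_tri {g : Matrix (Fin 4) (Fin 4) k}
    (htri : ∀ i j : Fin 4, j < i → g i j = 0) :
    g.det = g 0 0 * g 1 1 * g 2 2 * g 3 3 := by
  rw [Matrix.det_of_upperTriangular (fun i j h => htri i j h), Fin.prod_univ_four]

lemma rel_of_eq {x y : Matrix (Fin 4) (Fin 4) k} (g gi : Matrix (Fin 4) (Fin 4) k)
    (htri : ∀ i j : Fin 4, j < i → g i j = 0)
    (hdet : g 0 0 * g 1 1 * g 2 2 * g 3 3 = 1) (hinv : g * gi = 1)
    (h : g * x * gi = y) : Rel x y := by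
  refine ⟨g, ⟨by rw [det_of_tri htri]; exact hdet, htri⟩, ?_⟩
  rw [Matrix.inv_eq_right_inv hinv]
  exact h



set_option maxHeartbeats 1000000 in
lemma rel_M12 (a b c d e f s : k) :
    Rel (m6 a b c d e f) (m6 a (b + s*d) (c + s*e) d e f) := by
  apply rel_of_eq !![1,s,0,0; 0,1,0,0; 0,0,1,0; 0,0,0,1]
    !![1,-s,0,0; 0,1,0,0; 0,0,1,0; 0,0,0,1]
  · intro i j h
    fin_cases i <;> fin_cases j <;>
      first
        | exact absurd h (by decide)
        | rfl
        | simp [Matrix.vecHead, Matrix.vecTail]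
  · simp
  · ext i j
    fin_cases i <;> fin_cases j <;>
      simp [Matrix.mul_apply, Fin.sum_univ_four, Matrix.vecHead, Matrix.vecTail] <;> try ring
  · ext i j
    fin_cases i <;> fin_cases j <;>
      simp [m6, Matrix.mul_apply, Fin.sum_univ_four, Matrix.vecHead, Matrix.vecTail] <;> try ring

set_option maxHeartbeats 1000000 in
lemma rel_M13 (a b c d e f s : k) :
    Rel (m6 a b c d e f) (m6 a b (c + s*f) d e f) := by
  apply rel_of_eq !![1,0,s,0; 0,1,0,0; 0,0,1,0; 0,0,0,1]
    !![1,0,-s,0; 0,1,0,0; 0,0,1,0; 0,0,0,1]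
  · intro i j h
    fin_cases i <;> fin_cases j <;>
      first
        | exact absurd h (by decide)
        | rfl
        | simp [Matrix.vecHead, Matrix.vecTail]
  · simp
  · ext i j
    fin_cases i <;> fin_cases j <;>
      simp [Matrix.mul_apply, Fin.sum_univ_four, Matrix.vecHead, Matrix.vecTail] <;> try ring
  · ext i j
    fin_cases i <;> fin_cases j <;>
      simp [m6, Matrix.mul_apply, Fin.sum_univ_four, Matrix.vecHead, Matrix.vecTail] <;> try ring

set_option maxHeartbeats 1000000 in
lemma rel_M23 (a b c d e f s : k) :
    Rel (m6 a b c d e f) (m6 a (b - s*a) c d (e + s*f) f) := by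
  apply rel_of_eq !![1,0,0,0; 0,1,s,0; 0,0,1,0; 0,0,0,1]
    !![1,0,0,0; 0,1,-s,0; 0,0,1,0; 0,0,0,1]
  · intro i j h
    fin_cases i <;> fin_cases j <;>
      first
        | exact absurd h (by decide)
        | rfl
        | simp [Matrix.vecHead, Matrix.vecTail]
  · simp
  · ext i j
    fin_cases i <;> fin_cases j <;>
      simp [Matrix.mul_apply, Fin.sum_univ_four, Matrix.vecHead, Matrix.vecTail] <;> try ring
  · ext i j
    fin_cases i <;> fin_cases j <;>
      simp [m6, Matrix.mul_apply, Fin.sum_univ_four, Matrix.vecHead, Matrix.vecTail] <;> try ring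

set_option maxHeartbeats 1000000 in
lemma rel_M24 (a b c d e f s : k) :
    Rel (m6 a b c d e f) (m6 a b (c - s*a) d e f) := by
  apply rel_of_eq !![1,0,0,0; 0,1,0,s; 0,0,1,0; 0,0,0,1]
    !![1,0,0,0; 0,1,0,-s; 0,0,1,0; 0,0,0,1]
  · intro i j h
    fin_cases i <;> fin_cases j <;>
      first
        | exact absurd h (by decide)
        | rfl
        | simp [Matrix.vecHead, Matrix.vecTail]
  · simp
  · ext i j
    fin_cases i <;> fin_cases j <;>
      simp [Matrix.mul_apply, Fin.sum_univ_four, Matrix.vecHead, Matrix.vecTail] <;> try ring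
  · ext i j
    fin_cases i <;> fin_cases j <;>
      simp [m6, Matrix.mul_apply, Fin.sum_univ_four, Matrix.vecHead, Matrix.vecTail] <;> try ring

set_option maxHeartbeats 1000000 in
lemma rel_M34 (a b c d e f s : k) :
    Rel (m6 a b c d e f) (m6 a b (c - s*b) d (e - s*d) f) := by
  apply rel_of_eq !![1,0,0,0; 0,1,0,0; 0,0,1,s; 0,0,0,1]
    !![1,0,0,0; 0,1,0,0; 0,0,1,-s; 0,0,0,1]
  · intro i j h
    fin_cases i <;> fin_cases j <;>
      first
        | exact absurd h (by decide)
        | rfl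
        | simp [Matrix.vecHead, Matrix.vecTail]
  · simp
  · ext i j
    fin_cases i <;> fin_cases j <;>
      simp [Matrix.mul_apply, Fin.sum_univ_four, Matrix.vecHead, Matrix.vecTail] <;> try ring
  · ext i j
    fin_cases i <;> fin_cases j <;>
      simp [m6, Matrix.mul_apply, Fin.sum_univ_four, Matrix.vecHead, Matrix.vecTail] <;> try ring

set_option maxHeartbeats 1000000 in
lemma rel_T (a b c d e f u v w r : k) (hr : u*v^2*w^3*r^4 = 1) :
    Rel (m6 a b c d e f) (m6 (u*a) (u*v*b) (u*v*w*c) (v*d) (v*w*e) (w*f)) := by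
  apply rel_of_eq !![u*v*w*r,0,0,0; 0,v*w*r,0,0; 0,0,w*r,0; 0,0,0,r]
    !![v*w^2*r^3,0,0,0; 0,u*v*w^2*r^3,0,0; 0,0,u*v^2*w^2*r^3,0; 0,0,0,u*v^2*w^3*r^3]
  · intro i j h
    fin_cases i <;> fin_cases j <;>
      first
        | exact absurd h (by decide)
        | rfl
        | simp [Matrix.vecHead, Matrix.vecTail]
  · show u*v*w*r * (v*w*r) * (w*r) * r = 1
    linear_combination hr
  · ext i j
    fin_cases i <;> fin_cases j <;>
      simp [Matrix.mul_apply, Fin.sum_univ_four, Matrix.vecHead, Matrix.vecTail,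
        Matrix.one_apply] <;>
      first
        | linear_combination hr
        | skip
  · ext i j
    fin_cases i <;> fin_cases j <;>
      simp [m6, Matrix.mul_apply, Fin.sum_univ_four, Matrix.vecHead, Matrix.vecTail] <;>
      first
        | linear_combination (a*u)*hr
        | linear_combination (b*u*v)*hr
        | linear_combination (c*u*v*w)*hr
        | linear_combination (d*v)*hr
        | linear_combination (e*v*w)*hr
        | linear_combination (f*w)*hr
        | skip

lemma rel_scale [IsAlgClosed k] (a b c d e f u v w : k) (hu : u ≠ 0) (hv : v ≠ 0)
    (hw : w ≠ 0) :
    Rel (m6 a b c d e f) (m6 (u*a) (u*v*b) (u*v*w*c) (v*d) (v*w*e) (w*f)) := by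
  obtain ⟨r, hr⟩ := IsAlgClosed.exists_pow_nat_eq ((u*v^2*w^3)⁻¹) (n := 4) (by norm_num)
  refine rel_T a b c d e f u v w r ?_
  rw [hr]
  field_simp


-- PART 3: reps and covering (to be concatenated after part2 content)

def reps : Fin 16 → Matrix (Fin 4) (Fin 4) k :=
  ![m6 0 0 0 0 0 0, m6 1 0 0 0 0 0, m6 0 1 0 0 0 0, m6 0 0 1 0 0 0,
    m6 0 0 0 1 0 0, m6 0 0 0 0 1 0, m6 0 0 0 0 0 1, m6 1 0 0 1 0 0,
    m6 1 0 0 0 1 0, m6 1 0 0 0 0 1, m6 0 1 0 0 1 0, m6 0 1 0 0 0 1,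
    m6 0 0 1 1 0 0, m6 0 0 0 1 0 1, m6 1 0 0 1 0 1, m6 1 1 0 0 0 1]

section Cover
variable [IsAlgClosed k]

lemma coverA (a c d f : k) (hd : d ≠ 0) :
    ∃ i : Fin 16, Rel (m6 a 0 c d 0 f) (reps (k := k) i) := by
  rcases eq_or_ne f 0 with hf | hf
  · subst hf
    rcases eq_or_ne a 0 with ha | ha
    · subst ha
      rcases eq_or_ne c 0 with hc | hc
      · subst hc
        refine ⟨4, ?_⟩
        have h := rel_scale (k := k) 0 0 0 d 0 0 1 d⁻¹ 1 one_ne_zero (inv_ne_zero hd) one_ne_zero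
        simp only [mul_zero, inv_mul_cancel₀ hd] at h
        simpa [reps] using h
      · refine ⟨12, ?_⟩
        have h := rel_scale (k := k) 0 0 c d 0 0 1 d⁻¹ (d*c⁻¹) one_ne_zero (inv_ne_zero hd)
          (mul_ne_zero hd (inv_ne_zero hc))
        have hc1 : 1*d⁻¹*(d*c⁻¹)*c = 1 := by field_simp
        have hd1 : d⁻¹*d = 1 := inv_mul_cancel₀ hd
        simp only [mul_zero, hc1, hd1] at h
        simpa [reps] using h
    · -- a ≠ 0 : kill c, then scale to reps 7
      have h1 := rel_M24 a 0 c d 0 0 (c/a)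
      have e1 : c - c/a*a = 0 := by field_simp; ring
      rw [e1] at h1
      have h2 := rel_scale (k := k) a 0 0 d 0 0 a⁻¹ d⁻¹ 1 (inv_ne_zero ha) (inv_ne_zero hd)
        one_ne_zero
      simp only [mul_zero, inv_mul_cancel₀ ha, inv_mul_cancel₀ hd] at h2
      refine ⟨7, rel_trans h1 ?_⟩
      simpa [reps] using h2
  · -- f ≠ 0 : kill c via M13
    have h1 := rel_M13 a 0 c d 0 f (-(c/f))
    have e1 : c + -(c/f)*f = 0 := by field_simp; ring
    rw [e1] at h1
    rcases eq_or_ne a 0 with ha | ha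
    · subst ha
      refine ⟨13, rel_trans h1 ?_⟩
      have h2 := rel_scale (k := k) 0 0 0 d 0 f 1 d⁻¹ f⁻¹ one_ne_zero (inv_ne_zero hd)
        (inv_ne_zero hf)
      simp only [mul_zero, inv_mul_cancel₀ hd, inv_mul_cancel₀ hf] at h2
      simpa [reps] using h2
    · refine ⟨14, rel_trans h1 ?_⟩
      have h2 := rel_scale (k := k) a 0 0 d 0 f a⁻¹ d⁻¹ f⁻¹ (inv_ne_zero ha) (inv_ne_zero hd)
        (inv_ne_zero hf)
      simp only [mul_zero, inv_mul_cancel₀ ha, inv_mul_cancel₀ hd, inv_mul_cancel₀ hf] at h2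
      simpa [reps] using h2

lemma coverB (a b f : k) (hf : f ≠ 0) :
    ∃ i : Fin 16, Rel (m6 a b 0 0 0 f) (reps (k := k) i) := by
  rcases eq_or_ne a 0 with ha | ha
  · subst ha
    rcases eq_or_ne b 0 with hb | hb
    · subst hb
      refine ⟨6, ?_⟩
      have h := rel_scale (k := k) 0 0 0 0 0 f 1 1 f⁻¹ one_ne_zero one_ne_zero (inv_ne_zero hf)
      simp only [mul_zero, inv_mul_cancel₀ hf] at h
      simpa [reps] using h
    · refine ⟨11, ?_⟩
      have h := rel_scale (k := k) 0 b 0 0 0 f b⁻¹ 1 f⁻¹ (inv_ne_zero hb) one_ne_zero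
        (inv_ne_zero hf)
      have hb1 : b⁻¹*1*b = 1 := by field_simp
      simp only [mul_zero, hb1, inv_mul_cancel₀ hf] at h
      simpa [reps] using h
  · rcases eq_or_ne b 0 with hb | hb
    · subst hb
      refine ⟨9, ?_⟩
      have h := rel_scale (k := k) a 0 0 0 0 f a⁻¹ 1 f⁻¹ (inv_ne_zero ha) one_ne_zero
        (inv_ne_zero hf)
      simp only [mul_zero, inv_mul_cancel₀ ha, inv_mul_cancel₀ hf] at h
      simpa [reps] using h
    · refine ⟨15, ?_⟩
      have h := rel_scale (k := k) a b 0 0 0 f a⁻¹ (a*b⁻¹) f⁻¹ (inv_ne_zero ha)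
        (mul_ne_zero ha (inv_ne_zero hb)) (inv_ne_zero hf)
      have ha1 : a⁻¹*a = 1 := inv_mul_cancel₀ ha
      have hb1 : a⁻¹*(a*b⁻¹)*b = 1 := by field_simp
      simp only [mul_zero, ha1, hb1, inv_mul_cancel₀ hf] at h
      simpa [reps] using h

lemma cover (a b c d e f : k) :
    ∃ i : Fin 16, Rel (m6 a b c d e f) (reps (k := k) i) := by
  rcases eq_or_ne d 0 with hd | hd
  · subst hd
    rcases eq_or_ne f 0 with hf | hf
    · subst hf
      rcases eq_or_ne a 0 with ha | ha
      · subst ha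
        rcases eq_or_ne b 0 with hb | hb
        · subst hb
          rcases eq_or_ne e 0 with he | he
          · subst he
            rcases eq_or_ne c 0 with hc | hc
            · subst hc
              exact ⟨0, by simpa [reps] using rel_refl (m6 (k := k) 0 0 0 0 0 0)⟩
            · refine ⟨3, ?_⟩
              have h := rel_scale (k := k) 0 0 c 0 0 0 c⁻¹ 1 1 (inv_ne_zero hc) one_ne_zero
                one_ne_zero
              have hc1 : c⁻¹*1*1*c = 1 := by field_simp
              simp only [mul_zero, hc1] at h
              simpa [reps] using h
          · -- e ≠ 0 : kill c via M12, then scale to reps 5 or 2? here b=0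
            have h1 := rel_M12 0 0 c 0 e 0 (-(c/e))
            have e1 : c + -(c/e)*e = 0 := by field_simp; ring
            rw [e1] at h1
            simp only [mul_zero, add_zero, zero_add] at h1
            refine ⟨5, rel_trans h1 ?_⟩
            have h := rel_scale (k := k) 0 0 0 0 e 0 1 1 e⁻¹ one_ne_zero one_ne_zero
              (inv_ne_zero he)
            have he1 : 1*e⁻¹*e = 1 := by field_simp
            simp only [mul_zero, he1] at h
            simpa [reps] using h
        · -- b ≠ 0 : kill c via M34
          have h1 := rel_M34 0 b c 0 e 0 (c/b)
          have e1 : c - c/b*b = 0 := by field_simp; ring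
          have e2 : e - c/b*0 = e := by ring
          rw [e1, e2] at h1
          rcases eq_or_ne e 0 with he | he
          · subst he
            refine ⟨2, rel_trans h1 ?_⟩
            have h := rel_scale (k := k) 0 b 0 0 0 0 b⁻¹ 1 1 (inv_ne_zero hb) one_ne_zero
              one_ne_zero
            have hb1 : b⁻¹*1*b = 1 := by field_simp
            simp only [mul_zero, hb1] at h
            simpa [reps] using h
          · refine ⟨10, rel_trans h1 ?_⟩
            have h := rel_scale (k := k) 0 b 0 0 e 0 b⁻¹ 1 e⁻¹ (inv_ne_zero hb) one_ne_zero
              (inv_ne_zero he)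
            have hb1 : b⁻¹*1*b = 1 := by field_simp
            have he1 : 1*e⁻¹*e = 1 := by field_simp
            simp only [mul_zero, hb1, he1] at h
            simpa [reps] using h
      · -- a ≠ 0, d = f = 0 : kill b via M23, kill c via M24
        have h1 := rel_M23 a b c 0 e 0 (b/a)
        have e1 : b - b/a*a = 0 := by field_simp; ring
        have e2 : e + b/a*0 = e := by ring
        rw [e1, e2] at h1
        have h2 := rel_M24 a 0 c 0 e 0 (c/a)
        have e3 : c - c/a*a = 0 := by field_simp; ring
        rw [e3] at h2
        rcases eq_or_ne e 0 with he | he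
        · subst he
          refine ⟨1, rel_trans h1 (rel_trans h2 ?_)⟩
          have h := rel_scale (k := k) a 0 0 0 0 0 a⁻¹ 1 1 (inv_ne_zero ha) one_ne_zero
            one_ne_zero
          simp only [mul_zero, inv_mul_cancel₀ ha] at h
          simpa [reps] using h
        · refine ⟨8, rel_trans h1 (rel_trans h2 ?_)⟩
          have h := rel_scale (k := k) a 0 0 0 e 0 a⁻¹ 1 e⁻¹ (inv_ne_zero ha) one_ne_zero
            (inv_ne_zero he)
          have he1 : 1*e⁻¹*e = 1 := by field_simp
          simp only [mul_zero, inv_mul_cancel₀ ha, he1] at h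
          simpa [reps] using h
    · -- d = 0, f ≠ 0 : kill e via M23, kill c via M13, then coverB
      have h1 := rel_M23 a b c 0 e f (-(e/f))
      have e1 : e + -(e/f)*f = 0 := by field_simp; ring
      rw [e1] at h1
      have h2 := rel_M13 a (b - -(e/f)*a) c 0 0 f (-(c/f))
      have e2 : c + -(c/f)*f = 0 := by field_simp; ring
      rw [e2] at h2
      obtain ⟨i, hi⟩ := coverB (a) (b - -(e/f)*a) f hf
      exact ⟨i, rel_trans h1 (rel_trans h2 hi)⟩
  · -- d ≠ 0 : kill b via M12, kill e via M34, then coverA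
    have h1 := rel_M12 a b c d e f (-(b/d))
    have e1 : b + -(b/d)*d = 0 := by field_simp; ring
    rw [e1] at h1
    have h2 := rel_M34 a 0 (c + -(b/d)*e) d e f (e/d)
    have e2 : e - e/d*d = 0 := by field_simp; ring
    have e3 : c + -(b/d)*e - e/d*0 = c + -(b/d)*e := by ring
    rw [e2, e3] at h2
    obtain ⟨i, hi⟩ := coverA a (c + -(b/d)*e) d f hd
    exact ⟨i, rel_trans h1 (rel_trans h2 hi)⟩

end Cover


lemma sandwich {b c x : Matrix (Fin 4) (Fin 4) k}
    (hb : ∀ i j : Fin 4, j < i → b i j = 0)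
    (hc : ∀ i j : Fin 4, j < i → c i j = 0)
    (hx : x ∈ nilradical4 k) : b * x * c ∈ nilradical4 k := by
  intro i j hij
  rw [Matrix.mul_apply]
  apply Finset.sum_eq_zero
  intro l _
  by_cases hl : l ≤ j
  · apply mul_eq_zero_of_left
    rw [Matrix.mul_apply]
    apply Finset.sum_eq_zero
    intro m _
    by_cases hm : i ≤ m
    · exact mul_eq_zero_of_right _ (hx m l (le_trans hl (le_trans hij hm)))
    · rw [hb i m (lt_of_not_ge hm), zero_mul]
  · rw [hc l j (lt_of_not_ge hl), mul_zero]

-- PART 4: disjointness and the main theorem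

section Disjoint

/-- From a Borel conjugation between two strictly-upper matrices, extract the
linear relations between the entries. -/
lemma eqs_of_rel {a b c d e f a' b' c' d' e' f' : k}
    (h : Rel (m6 a b c d e f) (m6 a' b' c' d' e' f')) :
    ∃ p q r s α β δ ε ζ : k, p ≠ 0 ∧ q ≠ 0 ∧ r ≠ 0 ∧ s ≠ 0 ∧
      a*p = a'*q ∧
      b*p + d*α = a'*δ + b'*r ∧
      d*q = d'*r ∧
      c*p + e*α + f*β = a'*ε + b'*ζ + c'*s ∧
      e*q + f*δ = d'*ζ + e'*s ∧
      f*r = f'*s := by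
  obtain ⟨g, ⟨hdet, htri⟩, hconj⟩ := h
  have hu : IsUnit g.det := by rw [hdet]; exact isUnit_one
  have hg : g * (m6 a b c d e f) = (m6 a' b' c' d' e' f') * g := by
    have : g * (m6 a b c d e f) * g⁻¹ * g = (m6 a' b' c' d' e' f') * g := by rw [hconj]
    rwa [Matrix.mul_assoc _ g⁻¹ g, Matrix.nonsing_inv_mul _ hu, Matrix.mul_one] at this
  have hprod : g 0 0 * g 1 1 * g 2 2 * g 3 3 = 1 := by
    rw [← det_of_tri htri]; exact hdet
  have hp : g 0 0 ≠ 0 := by intro h0; rw [h0] at hprod; simp at hprod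
  have hq : g 1 1 ≠ 0 := by intro h0; rw [h0] at hprod; simp at hprod
  have hr : g 2 2 ≠ 0 := by intro h0; rw [h0] at hprod; simp at hprod
  have hs : g 3 3 ≠ 0 := by intro h0; rw [h0] at hprod; simp at hprod
  have t10 : g 1 0 = 0 := htri 1 0 (by decide)
  have t20 : g 2 0 = 0 := htri 2 0 (by decide)
  have t21 : g 2 1 = 0 := htri 2 1 (by decide)
  have t30 : g 3 0 = 0 := htri 3 0 (by decide)
  have t31 : g 3 1 = 0 := htri 3 1 (by decide)
  have t32 : g 3 2 = 0 := htri 3 2 (by decide)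
  refine ⟨g 0 0, g 1 1, g 2 2, g 3 3, g 0 1, g 0 2, g 1 2, g 1 3, g 2 3,
    hp, hq, hr, hs, ?_, ?_, ?_, ?_, ?_, ?_⟩
  · have := congrFun (congrFun hg 0) 1
    simp [m6, Matrix.mul_apply, Fin.sum_univ_four, Matrix.vecHead, Matrix.vecTail,
      t10, t20, t21, t30, t31, t32] at this
    linear_combination this
  · have := congrFun (congrFun hg 0) 2
    simp [m6, Matrix.mul_apply, Fin.sum_univ_four, Matrix.vecHead, Matrix.vecTail,
      t10, t20, t21, t30, t31, t32] at this
    linear_combination this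
  · have := congrFun (congrFun hg 1) 2
    simp [m6, Matrix.mul_apply, Fin.sum_univ_four, Matrix.vecHead, Matrix.vecTail,
      t10, t20, t21, t30, t31, t32] at this
    linear_combination this
  · have := congrFun (congrFun hg 0) 3
    simp [m6, Matrix.mul_apply, Fin.sum_univ_four, Matrix.vecHead, Matrix.vecTail,
      t10, t20, t21, t30, t31, t32] at this
    linear_combination this
  · have := congrFun (congrFun hg 1) 3
    simp [m6, Matrix.mul_apply, Fin.sum_univ_four, Matrix.vecHead, Matrix.vecTail,
      t10, t20, t21, t30, t31, t32] at this
    linear_combination this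
  · have := congrFun (congrFun hg 2) 3
    simp [m6, Matrix.mul_apply, Fin.sum_univ_four, Matrix.vecHead, Matrix.vecTail,
      t10, t20, t21, t30, t31, t32] at this
    linear_combination this


lemma vec6_five {α : Type*} (x0 x1 x2 x3 x4 x5 : α) :
    (![x0,x1,x2,x3,x4,x5] : Fin 6 → α) 5 = x5 := rfl
lemma vec6_four' {α : Type*} (x0 x1 x2 x3 x4 x5 : α) :
    (![x0,x1,x2,x3,x4,x5] : Fin 6 → α) 4 = x4 := rfl
lemma vec6_three' {α : Type*} (x0 x1 x2 x3 x4 x5 : α) :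
    (![x0,x1,x2,x3,x4,x5] : Fin 6 → α) 3 = x3 := rfl
lemma vec6_two' {α : Type*} (x0 x1 x2 x3 x4 x5 : α) :
    (![x0,x1,x2,x3,x4,x5] : Fin 6 → α) 2 = x2 := rfl

/-- The nine boolean invariants of a strictly upper triangular matrix. -/
def bitsOf (a b c d e f : k) : Fin 9 → Prop :=
  ![a = 0, d = 0, f = 0,
    a = 0 ∧ b = 0 ∧ d = 0,
    d = 0 ∧ e = 0 ∧ f = 0,
    a = 0 ∧ b = 0 ∧ c = 0 ∧ d = 0 ∧ e = 0 ∧ f = 0,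
    a*d = 0 ∧ d*f = 0 ∧ a*e + b*f = 0,
    a*d = 0, d*f = 0]

lemma bits_invariant {a b c d e f a' b' c' d' e' f' : k}
    (h : Rel (m6 a b c d e f) (m6 a' b' c' d' e' f')) (t : Fin 9) :
    (bitsOf a b c d e f t ↔ bitsOf a' b' c' d' e' f' t) := by
  obtain ⟨p, q, r, s, α, β, δ, ε, ζ, hp, hq, hr, hs, E1, E2, E3, E4, E5, E6⟩ := eqs_of_rel h
  have ha : a = 0 ↔ a' = 0 := by
    constructor <;> intro h0
    · have : a' * q = 0 := by rw [← E1, h0, zero_mul]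
      exact (mul_eq_zero.mp this).resolve_right hq
    · have : a * p = 0 := by rw [E1, h0, zero_mul]
      exact (mul_eq_zero.mp this).resolve_right hp
  have hd : d = 0 ↔ d' = 0 := by
    constructor <;> intro h0
    · have : d' * r = 0 := by rw [← E3, h0, zero_mul]
      exact (mul_eq_zero.mp this).resolve_right hr
    · have : d * q = 0 := by rw [E3, h0, zero_mul]
      exact (mul_eq_zero.mp this).resolve_right hq
  have hf : f = 0 ↔ f' = 0 := by
    constructor <;> intro h0
    · have : f' * s = 0 := by rw [← E6, h0, zero_mul]
      exact (mul_eq_zero.mp this).resolve_right hs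
    · have : f * r = 0 := by rw [E6, h0, zero_mul]
      exact (mul_eq_zero.mp this).resolve_right hr
  have hb0 : (a = 0 ∧ b = 0 ∧ d = 0) ↔ (a' = 0 ∧ b' = 0 ∧ d' = 0) := by
    constructor
    · rintro ⟨h1, h2, h3⟩
      refine ⟨ha.mp h1, ?_, hd.mp h3⟩
      have : b' * r = 0 := by
        rw [h2, h3, ha.mp h1] at E2
        linear_combination -E2
      exact (mul_eq_zero.mp this).resolve_right hr
    · rintro ⟨h1, h2, h3⟩
      refine ⟨ha.mpr h1, ?_, hd.mpr h3⟩
      have : b * p = 0 := by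
        rw [h1, h2, hd.mpr h3] at E2
        linear_combination E2
      exact (mul_eq_zero.mp this).resolve_right hp
  have he0 : (d = 0 ∧ e = 0 ∧ f = 0) ↔ (d' = 0 ∧ e' = 0 ∧ f' = 0) := by
    constructor
    · rintro ⟨h1, h2, h3⟩
      refine ⟨hd.mp h1, ?_, hf.mp h3⟩
      have : e' * s = 0 := by
        rw [h2, h3, hd.mp h1] at E5
        linear_combination -E5
      exact (mul_eq_zero.mp this).resolve_right hs
    · rintro ⟨h1, h2, h3⟩
      refine ⟨hd.mpr h1, ?_, hf.mpr h3⟩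
      have : e * q = 0 := by
        rw [h1, h2, hf.mpr h3] at E5
        linear_combination E5
      exact (mul_eq_zero.mp this).resolve_right hq
  have hall : (a = 0 ∧ b = 0 ∧ c = 0 ∧ d = 0 ∧ e = 0 ∧ f = 0) ↔
      (a' = 0 ∧ b' = 0 ∧ c' = 0 ∧ d' = 0 ∧ e' = 0 ∧ f' = 0) := by
    constructor
    · rintro ⟨h1, h2, h3, h4, h5, h6⟩
      obtain ⟨k1, k2, k3⟩ := hb0.mp ⟨h1, h2, h4⟩
      obtain ⟨-, k5, k6⟩ := he0.mp ⟨h4, h5, h6⟩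
      refine ⟨k1, k2, ?_, k3, k5, k6⟩
      have : c' * s = 0 := by
        rw [h3, h5, h6, k1, k2] at E4
        linear_combination -E4
      exact (mul_eq_zero.mp this).resolve_right hs
    · rintro ⟨h1, h2, h3, h4, h5, h6⟩
      obtain ⟨k1, k2, k3⟩ := hb0.mpr ⟨h1, h2, h4⟩
      obtain ⟨-, k5, k6⟩ := he0.mpr ⟨h4, h5, h6⟩
      refine ⟨k1, k2, ?_, k3, k5, k6⟩
      have : c * p = 0 := by
        rw [h1, h2, h3, k5, k6] at E4
        linear_combination E4
      exact (mul_eq_zero.mp this).resolve_right hp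
  have had : a*d = 0 ↔ a'*d' = 0 := by
    have key : a*d*(p*q) = a'*d'*(q*r) := by
      linear_combination (d*q)*E1 + (a'*q)*E3
    constructor <;> intro h0
    · have : a'*d'*(q*r) = 0 := by rw [← key, h0, zero_mul]
      exact (mul_eq_zero.mp this).resolve_right (mul_ne_zero hq hr)
    · have : a*d*(p*q) = 0 := by rw [key, h0, zero_mul]
      exact (mul_eq_zero.mp this).resolve_right (mul_ne_zero hp hq)
  have hdf : d*f = 0 ↔ d'*f' = 0 := by
    have key : d*f*(q*r) = d'*f'*(r*s) := by
      linear_combination (f*r)*E3 + (d'*r)*E6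
    constructor <;> intro h0
    · have : d'*f'*(r*s) = 0 := by rw [← key, h0, zero_mul]
      exact (mul_eq_zero.mp this).resolve_right (mul_ne_zero hr hs)
    · have : d*f*(q*r) = 0 := by rw [key, h0, zero_mul]
      exact (mul_eq_zero.mp this).resolve_right (mul_ne_zero hq hr)
  have hsq : (a*d = 0 ∧ d*f = 0 ∧ a*e + b*f = 0) ↔
      (a'*d' = 0 ∧ d'*f' = 0 ∧ a'*e' + b'*f' = 0) := by
    have key : q*r*s*(a'*e' + b'*f') = p*q*r*(a*e + b*f) + q*d*(f*r*α - a*p*ζ) := by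
      linear_combination (-(r*e'*s) + f*r*δ)*E1 + (-(q*f'*s))*E2 + (a*p*ζ)*E3 +
        (-(r*a*p))*E5 + (-(q*(b*p + d*α - a'*δ)))*E6
    constructor
    · rintro ⟨h1, h2, h3⟩
      refine ⟨had.mp h1, hdf.mp h2, ?_⟩
      have hz : q*r*s*(a'*e' + b'*f') = 0 := by
        rcases eq_or_ne d 0 with hd0 | hd0
        · rw [key, h3, hd0]; ring
        · have ha0 : a = 0 := (mul_eq_zero.mp h1).resolve_right hd0
          have hf0 : f = 0 := (mul_eq_zero.mp h2).resolve_left hd0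
          rw [key, h3, ha0, hf0]; ring
      have := mul_eq_zero.mp hz
      rcases this with h4 | h4
      · exact absurd h4 (mul_ne_zero (mul_ne_zero hq hr) hs)
      · exact h4
    · rintro ⟨h1, h2, h3⟩
      have h1' : a*d = 0 := had.mpr h1
      have h2' : d*f = 0 := hdf.mpr h2
      refine ⟨h1', h2', ?_⟩
      have hre : p*q*r*(a*e + b*f) = q*r*s*(a'*e' + b'*f') - q*d*(f*r*α - a*p*ζ) := by
        linear_combination -key
      have hz : p*q*r*(a*e + b*f) = 0 := by
        rcases eq_or_ne d 0 with hd0 | hd0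
        · rw [hre, h3, hd0]; ring
        · have ha0 : a = 0 := (mul_eq_zero.mp h1').resolve_right hd0
          have hf0 : f = 0 := (mul_eq_zero.mp h2').resolve_left hd0
          rw [hre, h3, ha0, hf0]; ring
      rcases mul_eq_zero.mp hz with h4 | h4
      · exact absurd h4 (mul_ne_zero (mul_ne_zero hp hq) hr)
      · exact h4
  fin_cases t <;>
    simp only [bitsOf, Matrix.cons_val_zero, Matrix.cons_val_one, Matrix.head_cons,
      Matrix.cons_val_succ] <;>
    first
      | exact ha
      | exact hd
      | exact hf
      | exact hb0
      | exact he0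
      | exact hall
      | exact hsq
      | exact had
      | exact hdf

/-- Boolean profile table of the sixteen representatives. -/
def profTable : Fin 16 → Fin 9 → Bool :=
  ![![true, true, true, true, true, true, true, true, true],
    ![false, true, true, false, true, false, true, true, true],
    ![true, true, true, false, true, false, true, true, true],
    ![true, true, true, true, true, false, true, true, true],
    ![true, false, true, false, false, false, true, true, true],
    ![true, true, true, true, false, false, true, true, true],
    ![true, true, false, true, false, false, true, true, true],
    ![false, false, true, false, false, false, false, false, true],
    ![false, true, true, false, false, false, false, true, true],
    ![false, true, false, false, false, false, true, true, true],
    ![true, true, true, false, false, false, true, true, true],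
    ![true, true, false, false, false, false, false, true, true],
    ![true, false, true, false, false, false, true, true, true],
    ![true, false, false, false, false, false, false, true, false],
    ![false, false, false, false, false, false, false, false, false],
    ![false, true, false, false, false, false, false, true, true]]

def tup : Fin 16 → Fin 6 → k :=
  ![![0,0,0,0,0,0], ![1,0,0,0,0,0], ![0,1,0,0,0,0], ![0,0,1,0,0,0],
    ![0,0,0,1,0,0], ![0,0,0,0,1,0], ![0,0,0,0,0,1], ![1,0,0,1,0,0],
    ![1,0,0,0,1,0], ![1,0,0,0,0,1], ![0,1,0,0,1,0], ![0,1,0,0,0,1],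
    ![0,0,1,1,0,0], ![0,0,0,1,0,1], ![1,0,0,1,0,1], ![1,1,0,0,0,1]]

lemma reps_eq_tup (i : Fin 16) :
    reps (k := k) i = m6 (tup i 0) (tup i 1) (tup i 2) (tup i 3) (tup i 4) (tup i 5) := by
  fin_cases i <;> rfl

set_option maxHeartbeats 4000000 in
lemma bits_rep (i : Fin 16) (t : Fin 9) :
    bitsOf (tup (k := k) i 0) (tup i 1) (tup i 2) (tup i 3) (tup i 4) (tup i 5) t ↔
      profTable i t = true := by
  fin_cases i <;> fin_cases t <;>
    norm_num [bitsOf, tup, profTable, Matrix.vecHead, Matrix.vecTail,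
      vec6_five, vec6_four', vec6_three', vec6_two']

lemma prof_injective : ∀ i j : Fin 16, (∀ t : Fin 9, profTable i t = profTable j t) →
    i = j ∨ (i = 4 ∧ j = 12) ∨ (i = 12 ∧ j = 4) := by decide

/-- `E23` is not conjugate to `E14 + E23`. -/
lemma special_pair : ¬ Rel (m6 (0:k) 0 0 1 0 0) (m6 0 0 1 1 0 0) := by
  intro h
  obtain ⟨p, q, r, s, α, β, δ, ε, ζ, hp, hq, hr, hs, E1, E2, E3, E4, E5, E6⟩ := eqs_of_rel h
  -- E4 : 0*p + 0*α + 0*β = 0*ε + 0*ζ + 1*s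
  have : s = 0 := by linear_combination -E4
  exact hs this

lemma special_pair' : ¬ Rel (m6 (0:k) 0 1 1 0 0) (m6 0 0 0 1 0 0) := by
  intro h
  obtain ⟨p, q, r, s, α, β, δ, ε, ζ, hp, hq, hr, hs, E1, E2, E3, E4, E5, E6⟩ := eqs_of_rel h
  have : p = 0 := by linear_combination E4
  exact hp this

lemma reps_not_rel {i j : Fin 16} (hij : i ≠ j) : ¬ Rel (reps (k := k) i) (reps j) := by
  intro h
  rw [reps_eq_tup i, reps_eq_tup j] at h
  have hbt : ∀ t : Fin 9, profTable i t = profTable j t := by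
    intro t
    have h1 := bits_rep (k := k) i t
    have h2 := bits_rep (k := k) j t
    have h3 := bits_invariant h t
    by_cases hi : profTable i t = true
    · rw [hi]; exact (h2.mp (h3.mp (h1.mpr hi))).symm
    · by_cases hj : profTable j t = true
      · exact absurd (h1.mp (h3.mpr (h2.mpr hj))) (fun hh => hi hh)
      · simp only [Bool.not_eq_true] at hi hj; rw [hi, hj]
  rcases prof_injective i j hbt with h0 | ⟨hi4, hj12⟩ | ⟨hi12, hj4⟩
  · exact hij h0
  · subst hi4; subst hj12
    exact special_pair (by simpa [reps_eq_tup, tup, Matrix.vecHead, Matrix.vecTail] using h)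
  · subst hi12; subst hj4
    exact special_pair' (by simpa [reps_eq_tup, tup, Matrix.vecHead, Matrix.vecTail] using h)

end Disjoint

end SL4X

open SL4X in
theorem sl4_sixteen_orbits (k : Type*) [Field k] [IsAlgClosed k] :
    ∃ reps : Fin 16 → Matrix (Fin 4) (Fin 4) k,
      (∀ i, reps i ∈ nilradical4 k) ∧
      (⋃ i, borelOrbit 4 k (reps i)) = nilradical4 k ∧
      (∀ i j, i ≠ j → borelOrbit 4 k (reps i) ∩ borelOrbit 4 k (reps j) = ∅) := by
  refine ⟨SL4X.reps, ?_, ?_, ?_⟩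
  · intro i
    rw [reps_eq_tup i]
    exact m6_mem _ _ _ _ _ _
  · apply Set.Subset.antisymm
    · rintro x hx
      simp only [Set.mem_iUnion] at hx
      obtain ⟨i, g, hg, rfl⟩ := hx
      have hrep : SL4X.reps (k := k) i ∈ nilradical4 k := by
        rw [reps_eq_tup i]; exact m6_mem _ _ _ _ _ _
      exact sandwich (fun i j h => hg.2 i j h)
        (fun i j h => (borel_inv_mem hg).2 i j h) hrep
    · intro x hx
      rw [eq_m6_of_mem hx]
      obtain ⟨i, hi⟩ := cover (x 0 1) (x 0 2) (x 0 3) (x 1 2) (x 1 3) (x 2 3)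
      simp only [Set.mem_iUnion]
      exact ⟨i, mem_orbit_iff.mpr (rel_symm hi)⟩
  · intro i j hij
    rw [Set.eq_empty_iff_forall_notMem]
    rintro x ⟨hxi, hxj⟩
    have h1 : Rel (SL4X.reps (k := k) i) x := mem_orbit_iff.mp hxi
    have h2 : Rel (SL4X.reps (k := k) j) x := mem_orbit_iff.mp hxj
    exact reps_not_rel hij (rel_trans h1 (rel_symm h2))
end

section
/- Let k be a field and B ⊂ SL₅(k) the upper triangular Borel. Every element of the B-orbit (under conjugation) of e₂₃ ∈ sl₅(k) lies in the set of elements r·e₂₃ + u·e₁₃ + v·e₂₄ + x·e₁₄ + y·e₂₅ + z·e₁₅ with r ≠ 0, r·x − u·v = 0 and r·z − u·y = 0. -/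
open Matrix

theorem sl5_orbit_e23_subset (k : Type*) [Field k] :
    borelOrbit 5 k (Matrix.single (1 : Fin 5) 2 (1 : k)) ⊆
      {m | ∃ r u v x y z : k, r ≠ 0 ∧ r * x - u * v = 0 ∧ r * z - u * y = 0 ∧
        m = r • Matrix.single (1 : Fin 5) 2 (1 : k) +
            u • Matrix.single (0 : Fin 5) 2 (1 : k) +
            v • Matrix.single (1 : Fin 5) 3 (1 : k) +
            x • Matrix.single (0 : Fin 5) 3 (1 : k) +
            y • Matrix.single (1 : Fin 5) 4 (1 : k) +
            z • Matrix.single (0 : Fin 5) 4 (1 : k)} := by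
  rintro m ⟨b, ⟨hdet, htri⟩, rfl⟩
  have hbt : b.BlockTriangular id := fun i j h => htri i j h
  have hu : IsUnit b.det := hdet ▸ isUnit_one
  have hinv : Invertible b := b.invertibleOfIsUnitDet hu
  have hbit : b⁻¹.BlockTriangular id := blockTriangular_inv_of_blockTriangular hbt
  -- entries of m
  have hm : ∀ i j : Fin 5, ((b * Matrix.single (1 : Fin 5) 2 (1 : k) * b⁻¹ : Matrix (Fin 5) (Fin 5) k)) i j
      = b i 1 * b⁻¹ 2 j := by
    intro i j
    simp [Matrix.mul_apply, Matrix.single, Fin.sum_univ_five, Fin.ext_iff]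
  have hprod : b 0 0 * b 1 1 * b 2 2 * b 3 3 * b 4 4 = 1 := by
    have := Matrix.det_of_upperTriangular hbt
    rw [hdet, Fin.prod_univ_five] at this
    linear_combination -this
  have h11 : b 1 1 ≠ 0 := fun h => by simp [h] at hprod
  have hBB : b * b⁻¹ = 1 := Matrix.mul_nonsing_inv b hu
  have h22 : b 2 2 * b⁻¹ 2 2 = 1 := by
    have h := congrArg (fun M => M 2 2) hBB
    simp only [Matrix.mul_apply, Fin.sum_univ_five, Matrix.one_apply] at h
    rw [htri 2 0 (by decide), htri 2 1 (by decide),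
      hbit (show (id (2:Fin 5)) < id 3 by decide),
      hbit (show (id (2:Fin 5)) < id 4 by decide)] at h
    simpa using h
  have hi22 : b⁻¹ 2 2 ≠ 0 := fun h => by simp [h] at h22
  refine ⟨b 1 1 * b⁻¹ 2 2, b 0 1 * b⁻¹ 2 2, b 1 1 * b⁻¹ 2 3, b 0 1 * b⁻¹ 2 3,
    b 1 1 * b⁻¹ 2 4, b 0 1 * b⁻¹ 2 4, mul_ne_zero h11 hi22, by ring, by ring, ?_⟩
  ext i j
  rw [hm]
  have z2 : b 2 1 = 0 := htri 2 1 (by decide)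
  have z3 : b 3 1 = 0 := htri 3 1 (by decide)
  have z4 : b 4 1 = 0 := htri 4 1 (by decide)
  have w0 : b⁻¹ 2 0 = 0 := hbit (show (id (0:Fin 5)) < id 2 by decide)
  have w1 : b⁻¹ 2 1 = 0 := hbit (show (id (1:Fin 5)) < id 2 by decide)
  fin_cases i <;> fin_cases j <;>
    simp only [Matrix.add_apply, Matrix.smul_apply, Matrix.single,
      Matrix.of_apply, smul_eq_mul] <;>
    norm_num [Fin.ext_iff, show ((0:Fin 5):ℕ)=0 from rfl, show ((1:Fin 5):ℕ)=1 from rfl,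
      show ((2:Fin 5):ℕ)=2 from rfl, show ((3:Fin 5):ℕ)=3 from rfl, show ((4:Fin 5):ℕ)=4 from rfl,
      show (⟨2, by omega⟩:Fin 5) = 2 from rfl, show (⟨3, by omega⟩:Fin 5) = 3 from rfl,
      show (⟨4, by omega⟩:Fin 5) = 4 from rfl, z2, z3, z4, w0, w1]
end

section
/- Let k be an algebraically closed field, B the upper triangular Borel of SL₄(k), and 𝔫 the strictly upper triangular 4×4 matrices with coordinates (u,v,w,x,y,z) = (entry(1,2), entry(2,3), entry(3,4), entry(1,3), entry(2,4), entry(1,4)). The locally closed set S = {v = 0, x,u,w arbitrary with u ≠ 0, w ≠ 0} decomposes into exactly two B-orbits: the orbit of e₁₂ + e₃₄ consists of those points with w·x + u·y = 0, and the orbit of e₁₂ + e₃₄ + e₂₄ consists of those with w·x + u·y ≠ 0. -/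
open Matrix

section Aux

variable {k : Type*} [Field k]

lemma mem_borelOrbit_iff (X m : Matrix (Fin 4) (Fin 4) k) :
    m ∈ borelOrbit 4 k X ↔ ∃ b : Matrix (Fin 4) (Fin 4) k,
      b.det = 1 ∧ (∀ i j : Fin 4, j < i → b i j = 0) ∧ b * X = m * b := by
  constructor
  · rintro ⟨b, ⟨hdet, htri⟩, rfl⟩
    have : Invertible b := b.invertibleOfIsUnitDet (by simp [hdet])
    exact ⟨b, hdet, htri,
      (Matrix.mul_inv_eq_iff_eq_mul_of_invertible b (b * X) _).mp rfl⟩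
  · rintro ⟨b, hdet, htri, hbx⟩
    have : Invertible b := b.invertibleOfIsUnitDet (by simp [hdet])
    exact ⟨b, ⟨hdet, htri⟩,
      (Matrix.mul_inv_eq_iff_eq_mul_of_invertible b (b * X) m).mpr hbx⟩

lemma combo_eq (u w x y z : k) :
    u • Matrix.single (0 : Fin 4) 1 (1 : k) +
        w • Matrix.single (2 : Fin 4) 3 (1 : k) +
        x • Matrix.single (0 : Fin 4) 2 (1 : k) +
        y • Matrix.single (1 : Fin 4) 3 (1 : k) +
        z • Matrix.single (0 : Fin 4) 3 (1 : k) =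
      !![0, u, x, z; 0, 0, 0, y; 0, 0, 0, w; 0, 0, 0, 0] := by
  ext i j
  fin_cases i <;> fin_cases j <;>
    simp [Matrix.add_apply, Matrix.smul_apply, smul_eq_mul, Matrix.vecHead, Matrix.vecTail]

lemma forward1 (b m : Matrix (Fin 4) (Fin 4) k)
    (hdet : b.det = 1)
    (htri : ∀ i j : Fin 4, j < i → b i j = 0)
    (heq : b * (Matrix.single (0 : Fin 4) 1 (1 : k) +
          Matrix.single (2 : Fin 4) 3 (1 : k)) = m * b) :
    ∃ u w x y z : k, u ≠ 0 ∧ w ≠ 0 ∧ w * x + u * y = 0 ∧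
        m = u • Matrix.single (0 : Fin 4) 1 (1 : k) +
            w • Matrix.single (2 : Fin 4) 3 (1 : k) +
            x • Matrix.single (0 : Fin 4) 2 (1 : k) +
            y • Matrix.single (1 : Fin 4) 3 (1 : k) +
            z • Matrix.single (0 : Fin 4) 3 (1 : k) := by
  have z10 := htri 1 0 (by decide); have z20 := htri 2 0 (by decide)
  have z30 := htri 3 0 (by decide); have z21 := htri 2 1 (by decide)
  have z31 := htri 3 1 (by decide); have z32 := htri 3 2 (by decide)
  rw [Matrix.det_of_upperTriangular (fun i j h => htri i j h), Fin.prod_univ_four] at hdet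
  have ha : b 0 0 ≠ 0 := fun h => by rw [h] at hdet; simp at hdet
  have hd : b 1 1 ≠ 0 := fun h => by rw [h] at hdet; simp at hdet
  have he : b 2 2 ≠ 0 := fun h => by rw [h] at hdet; simp at hdet
  have hf : b 3 3 ≠ 0 := fun h => by rw [h] at hdet; simp at hdet
  have E00 := congrFun (congrFun heq 0) 0
  have E01 := congrFun (congrFun heq 0) 1
  have E02 := congrFun (congrFun heq 0) 2
  have E03 := congrFun (congrFun heq 0) 3
  have E10 := congrFun (congrFun heq 1) 0
  have E11 := congrFun (congrFun heq 1) 1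
  have E12 := congrFun (congrFun heq 1) 2
  have E13 := congrFun (congrFun heq 1) 3
  have E20 := congrFun (congrFun heq 2) 0
  have E21 := congrFun (congrFun heq 2) 1
  have E22 := congrFun (congrFun heq 2) 2
  have E23 := congrFun (congrFun heq 2) 3
  have E30 := congrFun (congrFun heq 3) 0
  have E31 := congrFun (congrFun heq 3) 1
  have E32 := congrFun (congrFun heq 3) 2
  have E33 := congrFun (congrFun heq 3) 3
  simp only [Matrix.mul_apply, Matrix.add_apply, Fin.sum_univ_four,
    Matrix.single_apply_same,
    Matrix.single_apply_of_row_ne (show (0:Fin 4) ≠ 1 by decide) _ _ _,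
    Matrix.single_apply_of_row_ne (show (0:Fin 4) ≠ 2 by decide) _ _ _,
    Matrix.single_apply_of_row_ne (show (0:Fin 4) ≠ 3 by decide) _ _ _,
    Matrix.single_apply_of_row_ne (show (2:Fin 4) ≠ 0 by decide) _ _ _,
    Matrix.single_apply_of_row_ne (show (2:Fin 4) ≠ 1 by decide) _ _ _,
    Matrix.single_apply_of_row_ne (show (2:Fin 4) ≠ 3 by decide) _ _ _,
    Matrix.single_apply_of_col_ne _ _ (show (1:Fin 4) ≠ 0 by decide) _,
    Matrix.single_apply_of_col_ne _ _ (show (1:Fin 4) ≠ 2 by decide) _,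
    Matrix.single_apply_of_col_ne _ _ (show (1:Fin 4) ≠ 3 by decide) _,
    Matrix.single_apply_of_col_ne _ _ (show (3:Fin 4) ≠ 0 by decide) _,
    Matrix.single_apply_of_col_ne _ _ (show (3:Fin 4) ≠ 1 by decide) _,
    Matrix.single_apply_of_col_ne _ _ (show (3:Fin 4) ≠ 2 by decide) _,
    z10, z20, z30, z21, z31, z32,
    mul_zero, zero_mul, add_zero, zero_add, mul_one] at E00 E01 E02 E03 E10 E11 E12 E13 E20 E21 E22 E23 E30 E31 E32 E33
  have M00 : m 0 0 = 0 := (mul_eq_zero.mp E00.symm).resolve_right ha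
  have M10 : m 1 0 = 0 := (mul_eq_zero.mp E10.symm).resolve_right ha
  have M20 : m 2 0 = 0 := (mul_eq_zero.mp E20.symm).resolve_right ha
  have M30 : m 3 0 = 0 := (mul_eq_zero.mp E30.symm).resolve_right ha
  simp only [M00, M10, M20, M30, zero_mul, add_zero, zero_add, mul_zero] at E01 E02 E03 E11 E12 E13 E21 E22 E23 E31 E32 E33
  have M11 : m 1 1 = 0 := (mul_eq_zero.mp E11.symm).resolve_right hd
  have M21 : m 2 1 = 0 := (mul_eq_zero.mp E21.symm).resolve_right hd
  have M31 : m 3 1 = 0 := (mul_eq_zero.mp E31.symm).resolve_right hd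
  simp only [M11, M21, M31, zero_mul, add_zero, zero_add, mul_zero] at E12 E13 E22 E23 E32 E33
  have M12 : m 1 2 = 0 := (mul_eq_zero.mp E12.symm).resolve_right he
  have M22 : m 2 2 = 0 := (mul_eq_zero.mp E22.symm).resolve_right he
  have M32 : m 3 2 = 0 := (mul_eq_zero.mp E32.symm).resolve_right he
  simp only [M12, M22, M32, zero_mul, add_zero, zero_add, mul_zero] at E13 E23 E33
  have M33 : m 3 3 = 0 := (mul_eq_zero.mp E33.symm).resolve_right hf
  have hu : m 0 1 ≠ 0 := fun h => ha (by rw [E01, h, zero_mul])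
  have hw : m 2 3 ≠ 0 := fun h => he (by rw [E23, h, zero_mul])
  have key : m 2 3 * m 0 2 + m 0 1 * m 1 3 = 0 := by
    have h5 : (m 2 3 * m 0 2 + m 0 1 * m 1 3) * b 3 3 = m 0 1 * b 1 2 + m 0 2 * b 2 2 := by
      rw [E23, E13]; ring
    rw [← E02, mul_eq_zero] at h5
    exact h5.resolve_right hf
  refine ⟨m 0 1, m 2 3, m 0 2, m 1 3, m 0 3, hu, hw, key, ?_⟩
  ext i j
  fin_cases i <;> fin_cases j <;>
    simp [Matrix.add_apply, Matrix.smul_apply, M00, M10, M20, M30, M11, M21, M31, M12, M22, M32, M33,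
      Matrix.single_apply_same, smul_eq_mul]

lemma forward2 (b m : Matrix (Fin 4) (Fin 4) k)
    (hdet : b.det = 1)
    (htri : ∀ i j : Fin 4, j < i → b i j = 0)
    (heq : b * (Matrix.single (0 : Fin 4) 1 (1 : k) +
          Matrix.single (2 : Fin 4) 3 (1 : k) +
          Matrix.single (1 : Fin 4) 3 (1 : k)) = m * b) :
    ∃ u w x y z : k, u ≠ 0 ∧ w ≠ 0 ∧ w * x + u * y ≠ 0 ∧
        m = u • Matrix.single (0 : Fin 4) 1 (1 : k) +
            w • Matrix.single (2 : Fin 4) 3 (1 : k) +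
            x • Matrix.single (0 : Fin 4) 2 (1 : k) +
            y • Matrix.single (1 : Fin 4) 3 (1 : k) +
            z • Matrix.single (0 : Fin 4) 3 (1 : k) := by
  have z10 := htri 1 0 (by decide); have z20 := htri 2 0 (by decide)
  have z30 := htri 3 0 (by decide); have z21 := htri 2 1 (by decide)
  have z31 := htri 3 1 (by decide); have z32 := htri 3 2 (by decide)
  rw [Matrix.det_of_upperTriangular (fun i j h => htri i j h), Fin.prod_univ_four] at hdet
  have ha : b 0 0 ≠ 0 := fun h => by rw [h] at hdet; simp at hdet
  have hd : b 1 1 ≠ 0 := fun h => by rw [h] at hdet; simp at hdet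
  have he : b 2 2 ≠ 0 := fun h => by rw [h] at hdet; simp at hdet
  have hf : b 3 3 ≠ 0 := fun h => by rw [h] at hdet; simp at hdet
  have E00 := congrFun (congrFun heq 0) 0
  have E01 := congrFun (congrFun heq 0) 1
  have E02 := congrFun (congrFun heq 0) 2
  have E03 := congrFun (congrFun heq 0) 3
  have E10 := congrFun (congrFun heq 1) 0
  have E11 := congrFun (congrFun heq 1) 1
  have E12 := congrFun (congrFun heq 1) 2
  have E13 := congrFun (congrFun heq 1) 3
  have E20 := congrFun (congrFun heq 2) 0
  have E21 := congrFun (congrFun heq 2) 1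
  have E22 := congrFun (congrFun heq 2) 2
  have E23 := congrFun (congrFun heq 2) 3
  have E30 := congrFun (congrFun heq 3) 0
  have E31 := congrFun (congrFun heq 3) 1
  have E32 := congrFun (congrFun heq 3) 2
  have E33 := congrFun (congrFun heq 3) 3
  simp only [Matrix.mul_apply, Matrix.add_apply, Fin.sum_univ_four,
    Matrix.single_apply_same,
    Matrix.single_apply_of_row_ne (show (0:Fin 4) ≠ 1 by decide) _ _ _,
    Matrix.single_apply_of_row_ne (show (0:Fin 4) ≠ 2 by decide) _ _ _,
    Matrix.single_apply_of_row_ne (show (0:Fin 4) ≠ 3 by decide) _ _ _,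
    Matrix.single_apply_of_row_ne (show (2:Fin 4) ≠ 0 by decide) _ _ _,
    Matrix.single_apply_of_row_ne (show (2:Fin 4) ≠ 1 by decide) _ _ _,
    Matrix.single_apply_of_row_ne (show (2:Fin 4) ≠ 3 by decide) _ _ _,
    Matrix.single_apply_of_row_ne (show (1:Fin 4) ≠ 0 by decide) _ _ _,
    Matrix.single_apply_of_row_ne (show (1:Fin 4) ≠ 2 by decide) _ _ _,
    Matrix.single_apply_of_row_ne (show (1:Fin 4) ≠ 3 by decide) _ _ _,
    Matrix.single_apply_of_col_ne _ _ (show (1:Fin 4) ≠ 0 by decide) _,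
    Matrix.single_apply_of_col_ne _ _ (show (1:Fin 4) ≠ 2 by decide) _,
    Matrix.single_apply_of_col_ne _ _ (show (1:Fin 4) ≠ 3 by decide) _,
    Matrix.single_apply_of_col_ne _ _ (show (3:Fin 4) ≠ 0 by decide) _,
    Matrix.single_apply_of_col_ne _ _ (show (3:Fin 4) ≠ 1 by decide) _,
    Matrix.single_apply_of_col_ne _ _ (show (3:Fin 4) ≠ 2 by decide) _,
    z10, z20, z30, z21, z31, z32,
    mul_zero, zero_mul, add_zero, zero_add, mul_one] at E00 E01 E02 E03 E10 E11 E12 E13 E20 E21 E22 E23 E30 E31 E32 E33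
  have M00 : m 0 0 = 0 := (mul_eq_zero.mp E00.symm).resolve_right ha
  have M10 : m 1 0 = 0 := (mul_eq_zero.mp E10.symm).resolve_right ha
  have M20 : m 2 0 = 0 := (mul_eq_zero.mp E20.symm).resolve_right ha
  have M30 : m 3 0 = 0 := (mul_eq_zero.mp E30.symm).resolve_right ha
  simp only [M00, M10, M20, M30, zero_mul, add_zero, zero_add, mul_zero] at E01 E02 E03 E11 E12 E13 E21 E22 E23 E31 E32 E33
  have M11 : m 1 1 = 0 := (mul_eq_zero.mp E11.symm).resolve_right hd
  have M21 : m 2 1 = 0 := (mul_eq_zero.mp E21.symm).resolve_right hd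
  have M31 : m 3 1 = 0 := (mul_eq_zero.mp E31.symm).resolve_right hd
  simp only [M11, M21, M31, zero_mul, add_zero, zero_add, mul_zero] at E12 E13 E22 E23 E32 E33
  have M12 : m 1 2 = 0 := (mul_eq_zero.mp E12.symm).resolve_right he
  have M22 : m 2 2 = 0 := (mul_eq_zero.mp E22.symm).resolve_right he
  have M32 : m 3 2 = 0 := (mul_eq_zero.mp E32.symm).resolve_right he
  simp only [M12, M22, M32, zero_mul, add_zero, zero_add, mul_zero] at E13 E23 E33
  have M33 : m 3 3 = 0 := (mul_eq_zero.mp E33.symm).resolve_right hf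
  have hu : m 0 1 ≠ 0 := fun h => ha (by rw [E01, h, zero_mul])
  have hw : m 2 3 ≠ 0 := fun h => he (by rw [E23, h, zero_mul])
  have key : m 2 3 * m 0 2 + m 0 1 * m 1 3 ≠ 0 := by
    intro h
    have h5 : (m 2 3 * m 0 2 + m 0 1 * m 1 3) * b 3 3
        = m 0 1 * b 1 2 + m 0 2 * b 2 2 + m 0 1 * b 1 1 := by
      linear_combination (-(m 0 2)) * E23 - (m 0 1) * E13
    rw [h, zero_mul, ← E02, zero_add] at h5
    exact hd ((mul_eq_zero.mp h5.symm).resolve_left hu)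
  refine ⟨m 0 1, m 2 3, m 0 2, m 1 3, m 0 3, hu, hw, key, ?_⟩
  ext i j
  fin_cases i <;> fin_cases j <;>
    simp [Matrix.add_apply, Matrix.smul_apply, M00, M10, M20, M30, M11, M21, M31, M12, M22, M32, M33,
      Matrix.single_apply_same, smul_eq_mul]

lemma backward1 [IsAlgClosed k] (u w x y z : k) (hu : u ≠ 0) (hw : w ≠ 0)
    (hkey : w * x + u * y = 0) :
    ∃ b : Matrix (Fin 4) (Fin 4) k,
      b.det = 1 ∧ (∀ i j : Fin 4, j < i → b i j = 0) ∧
      b * (Matrix.single (0 : Fin 4) 1 (1 : k) +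
          Matrix.single (2 : Fin 4) 3 (1 : k)) =
        !![0, u, x, z; 0, 0, 0, y; 0, 0, 0, w; 0, 0, 0, 0] * b := by
  obtain ⟨d, hd2⟩ := IsAlgClosed.exists_pow_nat_eq ((u * w)⁻¹) (n := 2) (by norm_num)
  have hd2' : d ^ 2 * (u * w) = 1 := by rw [hd2]; field_simp
  have hdne : d ≠ 0 := by
    intro h; rw [h] at hd2'; simp at hd2'
  refine ⟨!![u * d, 0, z, 0; 0, d, y, 0; 0, 0, w, 0; 0, 0, 0, 1], ?_, ?_, ?_⟩
  · rw [Matrix.det_of_upperTriangular, Fin.prod_univ_four]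
    · simp [Matrix.vecHead, Matrix.vecTail]
      linear_combination hd2'
    · intro i j hij
      fin_cases i <;> fin_cases j <;>
        first
        | exact absurd hij (by decide)
        | simp [Matrix.vecHead, Matrix.vecTail]
  · intro i j hij
    fin_cases i <;> fin_cases j <;>
      first
      | exact absurd hij (by decide)
      | simp [Matrix.vecHead, Matrix.vecTail]
  · ext i j
    fin_cases i <;> fin_cases j <;>
      simp [Matrix.mul_apply, Matrix.add_apply, Fin.sum_univ_four,
        Matrix.vecHead, Matrix.vecTail] <;>
      first
      | linear_combination
      | linear_combination hkey
      | linear_combination -hkey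

lemma backward2 [IsAlgClosed k] (u w x y z : k) (hu : u ≠ 0) (hw : w ≠ 0)
    (hkey : w * x + u * y ≠ 0) :
    ∃ b : Matrix (Fin 4) (Fin 4) k,
      b.det = 1 ∧ (∀ i j : Fin 4, j < i → b i j = 0) ∧
      b * (Matrix.single (0 : Fin 4) 1 (1 : k) +
          Matrix.single (2 : Fin 4) 3 (1 : k) +
          Matrix.single (1 : Fin 4) 3 (1 : k)) =
        !![0, u, x, z; 0, 0, 0, y; 0, 0, 0, w; 0, 0, 0, 0] * b := by
  set c := w * x + u * y with hc
  obtain ⟨f, hf4⟩ := IsAlgClosed.exists_pow_nat_eq (u * (c ^ 2 * w)⁻¹) (n := 4) (by norm_num)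
  have hf4' : f ^ 4 * (c ^ 2 * w) = u := by rw [hf4]; field_simp
  have hfne : f ≠ 0 := by
    intro h; rw [h] at hf4'; simp at hf4'; exact hu hf4'.symm
  refine ⟨!![f * c, 0, z * f, 0; 0, f * c * u⁻¹, -(x * w * f) * u⁻¹, 0;
      0, 0, w * f, 0; 0, 0, 0, f], ?_, ?_, ?_⟩
  · rw [Matrix.det_of_upperTriangular, Fin.prod_univ_four]
    · simp [Matrix.vecHead, Matrix.vecTail]
      field_simp
      linear_combination hf4'
    · intro i j hij
      fin_cases i <;> fin_cases j <;>
        first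
        | exact absurd hij (by decide)
        | simp [Matrix.vecHead, Matrix.vecTail]
  · intro i j hij
    fin_cases i <;> fin_cases j <;>
      first
      | exact absurd hij (by decide)
      | simp [Matrix.vecHead, Matrix.vecTail]
  · ext i j
    fin_cases i <;> fin_cases j <;>
      simp [Matrix.mul_apply, Matrix.add_apply, Fin.sum_univ_four,
        Matrix.vecHead, Matrix.vecTail] <;>
      field_simp <;>
      ring

end Aux

/-- In root notation for `sl₄`: `x₁ = e₁₂`, `x₃ = e₃₄`, `x₁₂ = e₁₃`,
`x₂₃ = e₂₄`, `x₁₃ = e₁₄`. -/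
theorem sl4_locally_closed_two_orbits (k : Type*) [Field k] [IsAlgClosed k] :
    borelOrbit 4 k
        (Matrix.single (0 : Fin 4) 1 (1 : k) +
          Matrix.single (2 : Fin 4) 3 (1 : k)) =
      {m | ∃ u w x y z : k, u ≠ 0 ∧ w ≠ 0 ∧ w * x + u * y = 0 ∧
        m = u • Matrix.single (0 : Fin 4) 1 (1 : k) +
            w • Matrix.single (2 : Fin 4) 3 (1 : k) +
            x • Matrix.single (0 : Fin 4) 2 (1 : k) +
            y • Matrix.single (1 : Fin 4) 3 (1 : k) +
            z • Matrix.single (0 : Fin 4) 3 (1 : k)} ∧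
    borelOrbit 4 k
        (Matrix.single (0 : Fin 4) 1 (1 : k) +
          Matrix.single (2 : Fin 4) 3 (1 : k) +
          Matrix.single (1 : Fin 4) 3 (1 : k)) =
      {m | ∃ u w x y z : k, u ≠ 0 ∧ w ≠ 0 ∧ w * x + u * y ≠ 0 ∧
        m = u • Matrix.single (0 : Fin 4) 1 (1 : k) +
            w • Matrix.single (2 : Fin 4) 3 (1 : k) +
            x • Matrix.single (0 : Fin 4) 2 (1 : k) +
            y • Matrix.single (1 : Fin 4) 3 (1 : k) +
            z • Matrix.single (0 : Fin 4) 3 (1 : k)} := by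
  constructor
  · ext m
    rw [mem_borelOrbit_iff]
    constructor
    · rintro ⟨b, hdet, htri, heq⟩
      exact forward1 b m hdet htri heq
    · rintro ⟨u, w, x, y, z, hu, hw, hkey, rfl⟩
      obtain ⟨b, h1, h2, h3⟩ := backward1 u w x y z hu hw hkey
      exact ⟨b, h1, h2, by rw [combo_eq]; exact h3⟩
  · ext m
    rw [mem_borelOrbit_iff]
    constructor
    · rintro ⟨b, hdet, htri, heq⟩
      exact forward2 b m hdet htri heq
    · rintro ⟨u, w, x, y, z, hu, hw, hkey, rfl⟩
      obtain ⟨b, h1, h2, h3⟩ := backward2 u w x y z hu hw hkey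
      exact ⟨b, h1, h2, by rw [combo_eq]; exact h3⟩
end
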